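/- arXiv:1701.06836 — 2 statements merged into one kernel-verified Lean document; each statement's English description precedes it below -/
import Mathlib

section
/- The FOBI test statistic T_k is affine invariant: let x₁,…,x_n ∈ ℝ^p have invertible (positive definite) sample covariance Ŝ₁ = (1/n)Σᵢ (xᵢ − x̄)(xᵢ − x̄)ᵀ, let Ŝ₂ = (1/n)Σᵢ (xᵢ − x̄)(xᵢ − x̄)ᵀ Ŝ₁⁻¹ (xᵢ − x̄)(xᵢ − x̄)ᵀ, let R̂ = Ŝ₁^{-1/2} Ŝ₂ Ŝ₁^{-1/2} (with Ŝ₁^{1/2} the unique positive semidefinite square root), and for 0 ≤ k < p define T_k := inf over U ∈ ℝ^{p×(p−k)} with UᵀU = I_{p−k} of tr((Uᵀ(R̂ − (p+2)·I_p)U)²)/(p−k). Then for any invertible A ∈ ℝ^{p×p} and b ∈ ℝ^p, T_k computed from the transformed data A x₁ + b, …, A x_n + b equals T_k computed from x₁,…,x_n. -/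
open Matrix
open scoped Classical

/-- Sample mean of data points `x 1, …, x n` in `ℝ^p`. -/
noncomputable def sampleMean {n p : ℕ} (x : Fin n → Fin p → ℝ) : Fin p → ℝ :=
  fun i => (1 / (n : ℝ)) * ∑ t, x t i

/-- Sample covariance matrix `Ŝ₁ = (1/n)Σᵢ (xᵢ − x̄)(xᵢ − x̄)ᵀ`. -/
noncomputable def sampleS1 {n p : ℕ} (x : Fin n → Fin p → ℝ) :
    Matrix (Fin p) (Fin p) ℝ :=
  Matrix.of fun i j =>
    (1 / (n : ℝ)) * ∑ t, (x t i - sampleMean x i) * (x t j - sampleMean x j)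

/-- Sample FOBI matrix `Ŝ₂ = (1/n)Σᵢ (xᵢ − x̄)(xᵢ − x̄)ᵀ Ŝ₁⁻¹ (xᵢ − x̄)(xᵢ − x̄)ᵀ`. -/
noncomputable def sampleS2 {n p : ℕ} (x : Fin n → Fin p → ℝ) :
    Matrix (Fin p) (Fin p) ℝ :=
  Matrix.of fun i j =>
    (1 / (n : ℝ)) * ∑ t,
      ((fun l => x t l - sampleMean x l) ⬝ᵥ
          ((sampleS1 x)⁻¹ *ᵥ fun l => x t l - sampleMean x l)) *
        ((x t i - sampleMean x i) * (x t j - sampleMean x j))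

/-- The unique positive semidefinite square root of a positive semidefinite matrix
(junk value `0` if the matrix is not positive semidefinite). -/
noncomputable def psqrt {p : ℕ} (S : Matrix (Fin p) (Fin p) ℝ) :
    Matrix (Fin p) (Fin p) ℝ :=
  if h : S.PosSemidef then
    h.1.eigenvectorUnitary.1 * diagonal ((↑) ∘ (√·) ∘ h.1.eigenvalues) *
      (star h.1.eigenvectorUnitary : Matrix (Fin p) (Fin p) ℝ)
  else 0

/-- The FOBI matrix `R̂ = Ŝ₁^{-1/2} Ŝ₂ Ŝ₁^{-1/2}` computed from the data. -/
noncomputable def sampleR {n p : ℕ} (x : Fin n → Fin p → ℝ) :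
    Matrix (Fin p) (Fin p) ℝ :=
  (psqrt (sampleS1 x))⁻¹ * sampleS2 x * (psqrt (sampleS1 x))⁻¹

/-- The FOBI test statistic
`T_k = inf_{UᵀU = I} tr((Uᵀ(R̂ − (p+2)·I)U)²)/(p−k)`. -/
noncomputable def Tstat {n p : ℕ} (k : ℕ) (x : Fin n → Fin p → ℝ) : ℝ :=
  sInf {t : ℝ | ∃ U : Matrix (Fin p) (Fin (p - k)) ℝ, Uᵀ * U = 1 ∧
    t = ((Uᵀ * (sampleR x - ((p : ℝ) + 2) • (1 : Matrix (Fin p) (Fin p) ℝ)) * U) ^ 2).trace /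
      ((p : ℝ) - (k : ℝ))}

/- ### Auxiliary lemmas -/

section Aux

variable {n p : ℕ}

/-- Conjugation of a rank-one matrix. -/
lemma conj_vecMulVec (A : Matrix (Fin p) (Fin p) ℝ) (u v : Fin p → ℝ) :
    A * vecMulVec u v * Aᵀ = vecMulVec (A *ᵥ u) (A *ᵥ v) := by
  ext i j
  simp only [mul_apply, vecMulVec_apply, transpose_apply, mulVec, dotProduct,
    Finset.sum_mul, Finset.mul_sum]
  exact Finset.sum_congr rfl fun a _ => Finset.sum_congr rfl fun b _ => by ring

/-- Conjugate transpose over ℝ is the same as transpose. -/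
lemma real_conjTranspose_eq (M : Matrix (Fin p) (Fin p) ℝ) : Mᴴ = Mᵀ := by
  ext i j; simp [conjTranspose_apply]

/-- Conjugating a positive definite matrix by an invertible matrix. -/
lemma posDef_conj {S A : Matrix (Fin p) (Fin p) ℝ} (hS : S.PosDef) (hA : IsUnit A) :
    (A * S * Aᵀ).PosDef := by
  refine Matrix.PosDef.of_dotProduct_mulVec_pos ?_ ?_
  · show (A * S * Aᵀ)ᴴ = A * S * Aᵀ
    rw [real_conjTranspose_eq]
    have hSsymm : Sᵀ = S := by
      have := hS.1; rwa [Matrix.IsHermitian, real_conjTranspose_eq] at this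
    rw [transpose_mul, transpose_mul, transpose_transpose, hSsymm, mul_assoc]
  · intro v hv
    have hAT : IsUnit Aᵀ := (Matrix.isUnit_transpose A).mpr hA
    have hvy : Aᵀ *ᵥ v ≠ 0 := by
      intro h
      exact hv ((Matrix.mulVec_injective_iff_isUnit.mpr hAT).eq_iff.mp
        (by simpa using h))
    have hpos := hS.dotProduct_mulVec_pos hvy
    have hsv : star v = v := by funext i; simp
    have hsy : star (Aᵀ *ᵥ v) = Aᵀ *ᵥ v := by funext i; simp
    rw [hsy] at hpos
    have hrw : v ⬝ᵥ ((A * S * Aᵀ) *ᵥ v) = (Aᵀ *ᵥ v) ⬝ᵥ (S *ᵥ (Aᵀ *ᵥ v)) := by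
      rw [← mulVec_mulVec, ← mulVec_mulVec, dotProduct_mulVec v A, ← mulVec_transpose]
    rw [hsv, hrw]
    exact hpos

lemma sampleS1_eq (x : Fin n → Fin p → ℝ) :
    sampleS1 x = (1 / (n : ℝ)) •
      ∑ t, vecMulVec (fun l => x t l - sampleMean x l) (fun l => x t l - sampleMean x l) := by
  ext i j
  simp [sampleS1, Matrix.sum_apply, vecMulVec_apply]

lemma sampleS2_eq (x : Fin n → Fin p → ℝ) :
    sampleS2 x = (1 / (n : ℝ)) •
      ∑ t, ((fun l => x t l - sampleMean x l) ⬝ᵥ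
          ((sampleS1 x)⁻¹ *ᵥ fun l => x t l - sampleMean x l)) •
        vecMulVec (fun l => x t l - sampleMean x l) (fun l => x t l - sampleMean x l) := by
  ext i j
  simp [sampleS2, Matrix.sum_apply, vecMulVec_apply, mul_assoc]

lemma sampleMean_transform (hn : 0 < n) (x : Fin n → Fin p → ℝ)
    (A : Matrix (Fin p) (Fin p) ℝ) (b : Fin p → ℝ) :
    sampleMean (fun t => A *ᵥ x t + b) = A *ᵥ sampleMean x + b := by
  have hnn : (n : ℝ) ≠ 0 := Nat.cast_ne_zero.mpr hn.ne'
  funext i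
  simp only [sampleMean, Pi.add_apply, mulVec, dotProduct]
  rw [Finset.sum_add_distrib, Finset.sum_const, Finset.card_univ, Fintype.card_fin,
    nsmul_eq_mul, mul_add]
  congr 1
  · rw [Finset.sum_comm]
    simp only [Finset.mul_sum]
    exact Finset.sum_congr rfl fun j _ => Finset.sum_congr rfl fun t _ => by ring
  · field_simp

lemma centered_transform (hn : 0 < n) (x : Fin n → Fin p → ℝ)
    (A : Matrix (Fin p) (Fin p) ℝ) (b : Fin p → ℝ) (t : Fin n) :
    (fun l => (A *ᵥ x t + b) l - sampleMean (fun s => A *ᵥ x s + b) l)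
      = A *ᵥ (fun l => x t l - sampleMean x l) := by
  rw [sampleMean_transform hn x A b]
  funext l
  rw [show (fun l => x t l - sampleMean x l) = x t - sampleMean x from rfl, mulVec_sub]
  simp only [Pi.add_apply, Pi.sub_apply]
  ring

lemma sampleS1_transform (hn : 0 < n) (x : Fin n → Fin p → ℝ)
    (A : Matrix (Fin p) (Fin p) ℝ) (b : Fin p → ℝ) :
    sampleS1 (fun t => A *ᵥ x t + b) = A * sampleS1 x * Aᵀ := by
  rw [sampleS1_eq (fun t => A *ᵥ x t + b), sampleS1_eq x]
  simp only [centered_transform hn x A b]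
  rw [Matrix.mul_smul, Matrix.smul_mul, Matrix.mul_sum, Matrix.sum_mul]
  congr 1
  exact Finset.sum_congr rfl fun t _ => (conj_vecMulVec A _ _).symm

lemma quad_transform (x : Fin n → Fin p → ℝ)
    (A : Matrix (Fin p) (Fin p) ℝ) (hA : IsUnit A) (u : Fin p → ℝ) :
    (A *ᵥ u) ⬝ᵥ ((A * sampleS1 x * Aᵀ)⁻¹ *ᵥ (A *ᵥ u)) = u ⬝ᵥ ((sampleS1 x)⁻¹ *ᵥ u) := by
  have hAd : IsUnit A.det := (Matrix.isUnit_iff_isUnit_det A).mp hA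
  have h1 : A⁻¹ *ᵥ (A *ᵥ u) = u := by
    rw [mulVec_mulVec, Matrix.nonsing_inv_mul A hAd, one_mulVec]
  have h2 : (A * sampleS1 x * Aᵀ)⁻¹ *ᵥ (A *ᵥ u) = Aᵀ⁻¹ *ᵥ ((sampleS1 x)⁻¹ *ᵥ u) := by
    rw [Matrix.mul_inv_rev, Matrix.mul_inv_rev, ← mulVec_mulVec, ← mulVec_mulVec, h1]
  rw [h2, ← Matrix.transpose_nonsing_inv, dotProduct_mulVec, vecMul_transpose, h1]

lemma sampleS2_transform (hn : 0 < n) (x : Fin n → Fin p → ℝ)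
    (A : Matrix (Fin p) (Fin p) ℝ) (b : Fin p → ℝ) (hA : IsUnit A) :
    sampleS2 (fun t => A *ᵥ x t + b) = A * sampleS2 x * Aᵀ := by
  rw [sampleS2_eq (fun t => A *ᵥ x t + b), sampleS2_eq x]
  simp only [centered_transform hn x A b, sampleS1_transform hn x A b,
    quad_transform x A hA]
  rw [Matrix.mul_smul, Matrix.smul_mul, Matrix.mul_sum, Matrix.sum_mul]
  congr 1
  refine Finset.sum_congr rfl fun t _ => ?_
  rw [Matrix.mul_smul, Matrix.smul_mul, conj_vecMulVec]

lemma psqrt_mul_self {p : ℕ} {S : Matrix (Fin p) (Fin p) ℝ} (h : S.PosSemidef) :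
    psqrt S * psqrt S = S := by
  rw [psqrt, dif_pos h]
  have hu : (star h.1.eigenvectorUnitary : Matrix (Fin p) (Fin p) ℝ) * h.1.eigenvectorUnitary.1 = 1 :=
    Unitary.coe_star_mul_self _
  conv_rhs => rw [h.1.spectral_theorem, Unitary.conjStarAlgAut_apply]
  rw [show ∀ (U D V : Matrix (Fin p) (Fin p) ℝ), U * D * V * (U * D * V) = U * (D * (V * U) * D) * V
    from fun U D V => by simp only [Matrix.mul_assoc], hu, Matrix.mul_one, diagonal_mul_diagonal]
  congr 3
  funext i
  simp [Real.mul_self_sqrt (h.eigenvalues_nonneg i)]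

lemma psqrt_transpose {p : ℕ} {S : Matrix (Fin p) (Fin p) ℝ} (h : S.PosSemidef) :
    (psqrt S)ᵀ = psqrt S := by
  rw [psqrt, dif_pos h, transpose_mul, transpose_mul, diagonal_transpose, Matrix.mul_assoc]
  have h1 : (star h.1.eigenvectorUnitary : Matrix (Fin p) (Fin p) ℝ) = (h.1.eigenvectorUnitary.1)ᵀ := by
    ext i j; simp [Matrix.star_apply]
  rw [h1, transpose_transpose]

end Aux

/-- Affine invariance of the FOBI test statistic: `T_k` computed from `A xᵢ + b`
equals `T_k` computed from the `xᵢ`. -/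
theorem Tstat_affine_invariant {n p : ℕ} (k : ℕ) (hk : k < p) (hn : 0 < n)
    (x : Fin n → Fin p → ℝ) (hS1 : (sampleS1 x).PosDef)
    (A : Matrix (Fin p) (Fin p) ℝ) (hA : IsUnit A) (b : Fin p → ℝ) :
    Tstat k (fun t => A *ᵥ x t + b) = Tstat k x := by
  set y : Fin n → Fin p → ℝ := fun t => A *ᵥ x t + b with hy
  have hS1y : (sampleS1 y).PosDef := by
    rw [hy, sampleS1_transform hn x A b]; exact posDef_conj hS1 hA
  -- square roots, made opaque so that `rw` does not unfold them
  obtain ⟨C, hC⟩ : ∃ C, C = psqrt (sampleS1 x) := ⟨_, rfl⟩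
  obtain ⟨B, hB⟩ : ∃ B, B = psqrt (sampleS1 y) := ⟨_, rfl⟩
  have hCC : C * C = sampleS1 x := by
    rw [hC]; exact psqrt_mul_self hS1.posSemidef
  have hBB : B * B = sampleS1 y := by
    rw [hB]; exact psqrt_mul_self hS1y.posSemidef
  have hCsymm : Cᵀ = C := by
    rw [hC]; exact psqrt_transpose hS1.posSemidef
  have hBsymm : Bᵀ = B := by
    rw [hB]; exact psqrt_transpose hS1y.posSemidef
  have hCsq : C.det * C.det = (sampleS1 x).det := by rw [← Matrix.det_mul, hCC]
  have hBsq : B.det * B.det = (sampleS1 y).det := by rw [← Matrix.det_mul, hBB]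
  have hCd : IsUnit C.det := by
    refine isUnit_iff_ne_zero.mpr fun h => hS1.det_pos.ne' ?_
    rw [← hCsq, h, mul_zero]
  have hBd : IsUnit B.det := by
    refine isUnit_iff_ne_zero.mpr fun h => hS1y.det_pos.ne' ?_
    rw [← hBsq, h, mul_zero]
  -- the orthogonal matrix
  obtain ⟨O, hO⟩ : ∃ O, O = B⁻¹ * A * C := ⟨_, rfl⟩
  have hBinvsymm : (B⁻¹)ᵀ = B⁻¹ := by rw [Matrix.transpose_nonsing_inv, hBsymm]
  have hOT : Oᵀ = C * Aᵀ * B⁻¹ := by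
    rw [hO, transpose_mul, transpose_mul, hCsymm, hBinvsymm, mul_assoc]
  have hOOT : O * Oᵀ = 1 := by
    rw [hOT, hO]
    have h1 : B⁻¹ * A * C * (C * Aᵀ * B⁻¹) = B⁻¹ * (A * (C * C) * Aᵀ) * B⁻¹ := by
      noncomm_ring
    rw [h1, hCC, show A * sampleS1 x * Aᵀ = sampleS1 y from
      (sampleS1_transform hn x A b).symm, ← hBB,
      show B⁻¹ * (B * B) * B⁻¹ = (B⁻¹ * B) * (B * B⁻¹) from by noncomm_ring,
      Matrix.nonsing_inv_mul B hBd, Matrix.mul_nonsing_inv B hBd, one_mul]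
  have hOTO : Oᵀ * O = 1 := mul_eq_one_comm.mp hOOT
  -- R transforms by conjugation with O
  have hR : sampleR y = O * sampleR x * Oᵀ := by
    rw [sampleR, sampleR, ← hB, ← hC, hOT, hO,
      show (sampleS2 y : Matrix (Fin p) (Fin p) ℝ) = A * sampleS2 x * Aᵀ from
        sampleS2_transform hn x A b hA]
    have h2 : B⁻¹ * A * C * (C⁻¹ * sampleS2 x * C⁻¹) * (C * Aᵀ * B⁻¹)
        = B⁻¹ * (A * ((C * C⁻¹) * sampleS2 x * (C⁻¹ * C)) * Aᵀ) * B⁻¹ := by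
      noncomm_ring
    rw [h2, Matrix.mul_nonsing_inv C hCd, Matrix.nonsing_inv_mul C hCd, one_mul, mul_one]
  -- the defining sets of the two infima coincide
  have key : ∀ U : Matrix (Fin p) (Fin (p - k)) ℝ,
      Uᵀ * (sampleR y - ((p : ℝ) + 2) • (1 : Matrix (Fin p) (Fin p) ℝ)) * U
        = (Oᵀ * U)ᵀ * (sampleR x - ((p : ℝ) + 2) • (1 : Matrix (Fin p) (Fin p) ℝ))
            * (Oᵀ * U) := by
    intro U
    have expand : O * (sampleR x - ((p : ℝ) + 2) • (1 : Matrix (Fin p) (Fin p) ℝ)) * Oᵀ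
        = sampleR y - ((p : ℝ) + 2) • (1 : Matrix (Fin p) (Fin p) ℝ) := by
      rw [Matrix.mul_sub, Matrix.sub_mul, ← hR, Matrix.mul_smul, Matrix.smul_mul,
        mul_one, hOOT]
    rw [← expand, transpose_mul, transpose_transpose]
    simp only [Matrix.mul_assoc]
  have hset : {t : ℝ | ∃ U : Matrix (Fin p) (Fin (p - k)) ℝ, Uᵀ * U = 1 ∧
      t = ((Uᵀ * (sampleR y - ((p : ℝ) + 2) • (1 : Matrix (Fin p) (Fin p) ℝ)) * U) ^ 2).trace /
        ((p : ℝ) - (k : ℝ))}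
      = {t : ℝ | ∃ U : Matrix (Fin p) (Fin (p - k)) ℝ, Uᵀ * U = 1 ∧
      t = ((Uᵀ * (sampleR x - ((p : ℝ) + 2) • (1 : Matrix (Fin p) (Fin p) ℝ)) * U) ^ 2).trace /
        ((p : ℝ) - (k : ℝ))} := by
    ext t
    constructor
    · rintro ⟨U, hU, rfl⟩
      refine ⟨Oᵀ * U, ?_, ?_⟩
      · rw [transpose_mul, transpose_transpose, Matrix.mul_assoc,
          ← Matrix.mul_assoc O Oᵀ U, hOOT, Matrix.one_mul, hU]
      · rw [key U]
    · rintro ⟨V, hV, rfl⟩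
      refine ⟨O * V, ?_, ?_⟩
      · rw [transpose_mul, Matrix.mul_assoc, ← Matrix.mul_assoc Oᵀ O V, hOTO,
          Matrix.one_mul, hV]
      · rw [key (O * V), ← Matrix.mul_assoc Oᵀ O V, hOTO, Matrix.one_mul]
  rw [Tstat, Tstat]
  exact congrArg sInf hset
end

section
/- Under the NGCA null hypothesis the value p+2 is an eigenvalue of the FOBI matrix with multiplicity at least p−q: with z₁ ∈ ℝ^q satisfying E(z₁) = 0, E[z₁z₁ᵀ] = I_q, E‖z₁‖⁴ < ∞, z₂ ∈ ℝ^{p−q} distributed as a product of independent standard normals N(0,1), z₁ and z₂ independent, and z = (z₁ᵀ, z₂ᵀ)ᵀ, the characteristic polynomial of M := E[‖z‖² z zᵀ] is divisible by (X − (p+2))^{p−q}. -/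
open MeasureTheory ProbabilityTheory Matrix Polynomial

open Real Set
open scoped NNReal ENNReal


lemma gpdf_eq (x : ℝ) :
    gaussianPDFReal 0 1 x = (√(2 * π))⁻¹ * rexp (-(2⁻¹ : ℝ) * x ^ 2) := by
  unfold gaussianPDFReal
  norm_num
  left
  ring_nf

lemma meas_toNN : Measurable fun x => Real.toNNReal (gaussianPDFReal 0 1 x) :=
  (measurable_gaussianPDFReal 0 1).real_toNNReal

lemma gauss_withDensity :
    gaussianReal 0 1
      = (volume : Measure ℝ).withDensity
        (fun x => ((Real.toNNReal (gaussianPDFReal 0 1 x) : ℝ≥0) : ℝ≥0∞)) := by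
  rw [gaussianReal_of_var_ne_zero _ one_ne_zero]
  rfl

lemma integral_gaussianReal_eq (f : ℝ → ℝ) :
    ∫ x, f x ∂(gaussianReal 0 1) = ∫ x, gaussianPDFReal 0 1 x * f x := by
  rw [gauss_withDensity, integral_withDensity_eq_integral_smul meas_toNN]
  congr 1; ext x
  rw [NNReal.smul_def, smul_eq_mul, Real.coe_toNNReal _ (gaussianPDFReal_nonneg 0 1 x)]

lemma integrable_pow_gauss (n : ℕ) :
    Integrable (fun x : ℝ => x ^ n) (gaussianReal 0 1) := by
  rw [gauss_withDensity, integrable_withDensity_iff_integrable_smul meas_toNN]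
  have : (fun x : ℝ => Real.toNNReal (gaussianPDFReal 0 1 x) • (x ^ n))
      = fun x : ℝ => (√(2 * π))⁻¹ * (x ^ (n : ℝ) * rexp (-(2⁻¹ : ℝ) * x ^ 2)) := by
    ext x
    rw [NNReal.smul_def, smul_eq_mul, Real.coe_toNNReal _ (gaussianPDFReal_nonneg 0 1 x),
      gpdf_eq, Real.rpow_natCast]
    ring
  rw [this]
  exact (integrable_rpow_mul_exp_neg_mul_sq (by norm_num)
    (lt_of_lt_of_le (by norm_num) (Nat.cast_nonneg n))).const_mul _

lemma integrable_pow_exp (n : ℕ) :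
    Integrable (fun x : ℝ => x ^ n * rexp (-(2⁻¹ : ℝ) * x ^ 2)) := by
  have := integrable_rpow_mul_exp_neg_mul_sq (b := 2⁻¹) (by norm_num)
    (s := (n : ℝ)) (lt_of_lt_of_le (by norm_num) (Nat.cast_nonneg n))
  simpa [Real.rpow_natCast] using this

lemma integral_pow_gauss_odd (n : ℕ) (hn : Odd n) :
    ∫ x, x ^ n ∂(gaussianReal 0 1) = 0 := by
  rw [integral_gaussianReal_eq]
  set f : ℝ → ℝ := fun x => gaussianPDFReal 0 1 x * x ^ n with hf
  have hneg : (fun x => f (-x)) = fun x => - f x := by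
    ext x
    simp only [f, gpdf_eq, neg_sq, hn.neg_pow]
    ring
  have h1 : ∫ x, f x = - ∫ x, f x := by
    conv_lhs => rw [← integral_neg_eq_self f volume, hneg, integral_neg]
  linarith [h1]

lemma integral_Ioi_pow_exp (n : ℕ) :
    ∫ x in Set.Ioi (0:ℝ), x ^ n * rexp (-(2⁻¹ : ℝ) * x ^ 2)
      = (2⁻¹:ℝ) ^ (-((n:ℝ)+1)/2) * (1/2) * Real.Gamma (((n:ℝ)+1)/2) := by
  rw [← integral_rpow_mul_exp_neg_mul_rpow (p := 2) (q := (n:ℝ)) (b := 2⁻¹)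
    (by norm_num) (lt_of_lt_of_le (by norm_num) (Nat.cast_nonneg n)) (by norm_num)]
  congr 1
  ext x
  rw [Real.rpow_natCast, show (2:ℝ) = ((2:ℕ):ℝ) by norm_num, Real.rpow_natCast]

lemma integral_line_pow_exp_even (n : ℕ) (hn : Even n) :
    ∫ x : ℝ, x ^ n * rexp (-(2⁻¹ : ℝ) * x ^ 2)
      = 2 * ((2⁻¹:ℝ) ^ (-((n:ℝ)+1)/2) * (1/2) * Real.Gamma (((n:ℝ)+1)/2)) := by
  have hint := integrable_pow_exp n
  rw [← intervalIntegral.integral_Iic_add_Ioi (b := (0:ℝ)) hint.integrableOn hint.integrableOn]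
  have hIic : ∫ x in Set.Iic (0:ℝ), x ^ n * rexp (-(2⁻¹ : ℝ) * x ^ 2)
      = ∫ x in Set.Ioi (0:ℝ), x ^ n * rexp (-(2⁻¹ : ℝ) * x ^ 2) := by
    rw [show Set.Iic (0:ℝ) = Set.Iic (-0:ℝ) by norm_num,
      ← integral_comp_neg_Ioi (0:ℝ) (fun x => x ^ n * rexp (-(2⁻¹ : ℝ) * x ^ 2))]
    congr 1; ext x
    rw [hn.neg_pow, neg_sq]
  rw [hIic, integral_Ioi_pow_exp]
  ring

lemma rpow_inv_two_neg (a : ℝ) : ((2:ℝ)⁻¹) ^ (-a) = (2:ℝ) ^ a := by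
  rw [Real.inv_rpow (by norm_num : (0:ℝ) ≤ 2), ← Real.rpow_neg (by norm_num), neg_neg]

lemma sqrt_two_pi_pos : (0:ℝ) < √(2 * π) := Real.sqrt_pos.mpr (by positivity)

lemma integral_pow_gauss_even (n : ℕ) (hn : Even n) :
    ∫ x, x ^ n ∂(gaussianReal 0 1)
      = (√(2 * π))⁻¹ * (2 * ((2:ℝ) ^ (((n:ℝ)+1)/2) * (1/2) * Real.Gamma (((n:ℝ)+1)/2))) := by
  rw [integral_gaussianReal_eq]
  have : (fun x : ℝ => gaussianPDFReal 0 1 x * x ^ n)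
      = fun x : ℝ => (√(2 * π))⁻¹ * (x ^ n * rexp (-(2⁻¹ : ℝ) * x ^ 2)) := by
    ext x; rw [gpdf_eq]; ring
  rw [this, integral_const_mul, integral_line_pow_exp_even n hn,
    show -((n:ℝ)+1)/2 = -(((n:ℝ)+1)/2) by ring, rpow_inv_two_neg]

lemma gamma_three_halves : Real.Gamma ((3:ℝ)/2) = √π / 2 := by
  rw [show (3:ℝ)/2 = 1/2 + 1 by norm_num, Real.Gamma_add_one (by norm_num),
    Real.Gamma_one_half_eq]
  ring

lemma gamma_five_halves : Real.Gamma ((5:ℝ)/2) = 3 * √π / 4 := by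
  rw [show (5:ℝ)/2 = 3/2 + 1 by norm_num, Real.Gamma_add_one (by norm_num),
    gamma_three_halves]
  ring

lemma two_rpow_three_halves : (2:ℝ) ^ ((3:ℝ)/2) = 2 * √2 := by
  rw [show (3:ℝ)/2 = 1 + 1/2 by norm_num, Real.rpow_add (by norm_num), Real.rpow_one,
    ← Real.sqrt_eq_rpow]

lemma two_rpow_five_halves : (2:ℝ) ^ ((5:ℝ)/2) = 4 * √2 := by
  rw [show (5:ℝ)/2 = 2 + 1/2 by norm_num, Real.rpow_add (by norm_num),
    ← Real.sqrt_eq_rpow, show (2:ℝ) ^ (2:ℝ) = 4 by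
      rw [show (2:ℝ) = ((2:ℕ):ℝ) by norm_num, Real.rpow_natCast]; norm_num]

lemma sqrt_two_pi_eq : √(2 * π) = √2 * √π := Real.sqrt_mul (by norm_num) π

lemma gm0 : ∫ x, x ^ 0 ∂(gaussianReal 0 1) = 1 := by simp

lemma gm1 : ∫ x, x ^ 1 ∂(gaussianReal 0 1) = 0 := integral_pow_gauss_odd 1 (by norm_num)

lemma gm3 : ∫ x, x ^ 3 ∂(gaussianReal 0 1) = 0 := integral_pow_gauss_odd 3 (by decide)

lemma sqrt_two_ne : (√2 : ℝ) ≠ 0 := by positivity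
lemma sqrt_pi_ne : (√π : ℝ) ≠ 0 := by positivity

lemma gm2 : ∫ x, x ^ 2 ∂(gaussianReal 0 1) = 1 := by
  rw [integral_pow_gauss_even 2 (by decide)]
  norm_num
  rw [two_rpow_three_halves, gamma_three_halves]
  field_simp

lemma gm4 : ∫ x, x ^ 4 ∂(gaussianReal 0 1) = 3 := by
  rw [integral_pow_gauss_even 4 (by decide)]
  norm_num
  rw [two_rpow_five_halves, gamma_five_halves]
  field_simp

section PiGauss

variable {r : ℕ}

lemma pi_integral_prod (g : Fin r → ℝ → ℝ) :
    ∫ x : Fin r → ℝ, ∏ l, g l (x l) ∂(Measure.pi fun _ => gaussianReal 0 1)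
      = ∏ l, ∫ t, g l t ∂(gaussianReal 0 1) := by
  letI : MeasureSpace ℝ := ⟨gaussianReal 0 1⟩
  haveI : SigmaFinite (volume : Measure ℝ) :=
    (inferInstance : SigmaFinite (gaussianReal 0 1))
  exact MeasureTheory.integral_fintype_prod_eq_prod (ι := Fin r) g

lemma pi_integrable_prod (g : Fin r → ℝ → ℝ)
    (hg : ∀ l, Integrable (g l) (gaussianReal 0 1)) :
    Integrable (fun x : Fin r → ℝ => ∏ l, g l (x l))
      (Measure.pi fun _ => gaussianReal 0 1) := by
  letI : MeasureSpace ℝ := ⟨gaussianReal 0 1⟩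
  haveI : SigmaFinite (volume : Measure ℝ) :=
    (inferInstance : SigmaFinite (gaussianReal 0 1))
  exact MeasureTheory.Integrable.fintype_prod hg

lemma prod_pow_single (x : Fin r → ℝ) (i : Fin r) (n : ℕ) :
    ∏ l, (x l) ^ (if l = i then n else 0) = x i ^ n := by
  simp [pow_ite, Finset.prod_ite_eq']

lemma mono_integrable (e : Fin r → ℕ) :
    Integrable (fun x : Fin r → ℝ => ∏ l, (x l) ^ (e l))
      (Measure.pi fun _ => gaussianReal 0 1) :=
  pi_integrable_prod (fun l t => t ^ (e l)) (fun l => integrable_pow_gauss (e l))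

lemma mono_integral (e : Fin r → ℕ) :
    ∫ x : Fin r → ℝ, ∏ l, (x l) ^ (e l) ∂(Measure.pi fun _ => gaussianReal 0 1)
      = ∏ l, ∫ t, t ^ (e l) ∂(gaussianReal 0 1) :=
  pi_integral_prod (fun l t => t ^ (e l))

lemma mono_integral_odd (e : Fin r → ℕ) (l₀ : Fin r) (h : Odd (e l₀)) :
    ∫ x : Fin r → ℝ, ∏ l, (x l) ^ (e l) ∂(Measure.pi fun _ => gaussianReal 0 1) = 0 := by
  rw [mono_integral]
  exact Finset.prod_eq_zero (Finset.mem_univ l₀) (integral_pow_gauss_odd _ h)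

end PiGauss

section NuMoments

variable {r : ℕ}

lemma expand1 (x : Fin r → ℝ) (i : Fin r) :
    x i = ∏ l, (x l) ^ (if l = i then 1 else 0) := by
  simp only [prod_pow_single, pow_one]

lemma expand2 (x : Fin r → ℝ) (i j : Fin r) :
    x i * x j = ∏ l, (x l) ^ ((if l = i then 1 else 0) + (if l = j then 1 else 0)) := by
  simp only [pow_add, Finset.prod_mul_distrib, prod_pow_single, pow_one]

lemma expand3 (x : Fin r → ℝ) (k i j : Fin r) :
    x k ^ 2 * (x i * x j)
      = ∏ l, (x l) ^ ((if l = k then 2 else 0)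
          + ((if l = i then 1 else 0) + (if l = j then 1 else 0))) := by
  simp only [pow_add, Finset.prod_mul_distrib, prod_pow_single, pow_one, mul_assoc]

lemma nu_integrable_single (i : Fin r) :
    Integrable (fun x : Fin r → ℝ => x i) (Measure.pi fun _ => gaussianReal 0 1) := by
  have := mono_integrable (fun l => if l = i then 1 else 0)
  simpa only [prod_pow_single, pow_one] using this

lemma nu_int_single (i : Fin r) :
    ∫ x : Fin r → ℝ, x i ∂(Measure.pi fun _ => gaussianReal 0 1) = 0 := by
  simp_rw [expand1 _ i]
  exact mono_integral_odd _ i (by simp)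

lemma nu_integrable_pair (i j : Fin r) :
    Integrable (fun x : Fin r → ℝ => x i * x j) (Measure.pi fun _ => gaussianReal 0 1) := by
  have := mono_integrable (fun l => (if l = i then 1 else 0) + (if l = j then 1 else 0))
  simpa only [pow_add, Finset.prod_mul_distrib, prod_pow_single, pow_one] using this

lemma nu_int_pair (i j : Fin r) :
    ∫ x : Fin r → ℝ, x i * x j ∂(Measure.pi fun _ => gaussianReal 0 1)
      = if i = j then 1 else 0 := by
  simp_rw [expand2 _ i j]
  by_cases h : i = j
  · subst h
    simp only [if_pos rfl]
    rw [mono_integral]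
    apply Finset.prod_eq_one
    intro l _
    by_cases hl : l = i <;> simp [hl, gm2, gm0]
  · rw [if_neg h]
    apply mono_integral_odd _ j
    have hji : ¬ j = i := fun h' => h h'.symm
    simp [hji]

lemma nu_integrable_quad (k i j : Fin r) :
    Integrable (fun x : Fin r → ℝ => x k ^ 2 * (x i * x j))
      (Measure.pi fun _ => gaussianReal 0 1) := by
  have := mono_integrable (fun l => (if l = k then 2 else 0)
    + ((if l = i then 1 else 0) + (if l = j then 1 else 0)))
  simpa only [pow_add, Finset.prod_mul_distrib, prod_pow_single, pow_one, mul_assoc] using this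

lemma nu_int_quad (k i j : Fin r) :
    ∫ x : Fin r → ℝ, x k ^ 2 * (x i * x j) ∂(Measure.pi fun _ => gaussianReal 0 1)
      = if i = j then (if k = i then 3 else 1) else 0 := by
  simp_rw [expand3 _ k i j]
  by_cases h : i = j
  · subst h
    rw [if_pos rfl, mono_integral]
    by_cases hk : k = i
    · subst hk
      rw [if_pos rfl]
      have h4 : ∀ l : Fin r, ∫ t, t ^ ((if l = k then 2 else 0)
          + ((if l = k then 1 else 0) + (if l = k then 1 else 0))) ∂(gaussianReal 0 1)
          = if l = k then 3 else 1 := by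
        intro l
        by_cases hl : l = k <;> simp [hl, gm4, gm0]
      rw [Finset.prod_congr rfl (fun l _ => h4 l)]
      simp [Finset.prod_ite_eq']
    · rw [if_neg hk]
      apply Finset.prod_eq_one
      intro l _
      by_cases hl : l = k
      · subst hl
        have hli : ¬ l = i := fun h' => hk h'
        simp [hli, gm2]
      · by_cases hl2 : l = i
        · subst hl2
          have hlk : ¬ l = k := hl
          simp [hlk, gm2]
        · simp [hl, hl2, gm0]
  · rw [if_neg h]
    apply mono_integral_odd _ j
    have hji : ¬ j = i := fun h' => h h'.symm
    by_cases hjk : j = k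
    · have hki : ¬ k = i := hjk ▸ hji
      simp [hjk, hji, hki]
      decide
    · simp [hjk, hji]

end NuMoments

section NuSums

variable {r : ℕ}

lemma nu_integrable_sum_mul (i j : Fin r) :
    Integrable (fun x : Fin r → ℝ => (∑ k, x k ^ 2) * (x i * x j))
      (Measure.pi fun _ => gaussianReal 0 1) := by
  have h1 : (fun x : Fin r → ℝ => (∑ k, x k ^ 2) * (x i * x j))
      = fun x => ∑ k, x k ^ 2 * (x i * x j) := by
    ext x; rw [Finset.sum_mul]
  rw [h1]
  exact integrable_finset_sum _ (fun k _ => nu_integrable_quad k i j)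

lemma nu_int_sum_mul (i j : Fin r) :
    ∫ x : Fin r → ℝ, (∑ k, x k ^ 2) * (x i * x j) ∂(Measure.pi fun _ => gaussianReal 0 1)
      = if i = j then (r : ℝ) + 2 else 0 := by
  have h1 : (fun x : Fin r → ℝ => (∑ k, x k ^ 2) * (x i * x j))
      = fun x => ∑ k, x k ^ 2 * (x i * x j) := by
    ext x; rw [Finset.sum_mul]
  rw [h1, integral_finset_sum _ (fun k _ => nu_integrable_quad k i j)]
  simp_rw [nu_int_quad]
  by_cases h : i = j
  · subst h
    simp only [eq_self_iff_true, if_true]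
    have h2 : ∀ k : Fin r, (if k = i then (3:ℝ) else 1) = 1 + (if k = i then 2 else 0) := by
      intro k; split <;> norm_num
    rw [Finset.sum_congr rfl (fun k _ => h2 k), Finset.sum_add_distrib, Finset.sum_const,
      Finset.sum_ite_eq' Finset.univ i (fun _ => (2:ℝ))]
    simp [Finset.card_univ]
  · simp [h]

lemma nu_integrable_sum_single (j : Fin r) :
    Integrable (fun x : Fin r → ℝ => (∑ k, x k ^ 2) * x j)
      (Measure.pi fun _ => gaussianReal 0 1) := by
  have h1 : (fun x : Fin r → ℝ => (∑ k, x k ^ 2) * x j)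
      = fun x => ∑ k, x k ^ 2 * x j := by
    ext x; rw [Finset.sum_mul]
  rw [h1]
  refine integrable_finset_sum _ (fun k _ => ?_)
  have := mono_integrable (fun l => (if l = k then 2 else 0) + (if l = j then 1 else 0))
  simpa only [pow_add, Finset.prod_mul_distrib, prod_pow_single, pow_one] using this

end NuSums

lemma charpoly_diag_const {r : ℕ} (c : ℝ) :
    (Matrix.diagonal fun _ : Fin r => c).charpoly = (Polynomial.X - Polynomial.C c) ^ r := by
  have h : (Matrix.diagonal fun _ : Fin r => c).charmatrix
      = Matrix.diagonal (fun _ : Fin r => Polynomial.X - Polynomial.C c) := by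
    ext i j
    by_cases h : i = j
    · subst h; simp
    · rw [Matrix.charmatrix_apply_ne _ _ _ h, Matrix.diagonal_apply_ne _ h,
        Matrix.diagonal_apply_ne _ h]
      simp
  rw [Matrix.charpoly, h, Matrix.det_diagonal]
  simp [Finset.card_univ]

lemma le_one_add_pow_four (t : ℝ) (ht : 0 ≤ t) :
    t ≤ 1 + t ^ 4 ∧ t ^ 2 ≤ 1 + t ^ 4 ∧ t ^ 3 ≤ 1 + t ^ 4 := by
  refine ⟨?_, ?_, ?_⟩ <;> nlinarith [sq_nonneg t, sq_nonneg (t - 1), sq_nonneg (t ^ 2 - 1),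
    sq_nonneg (t ^ 2 - t), sq_nonneg (t ^ 2 + t), pow_le_pow_left₀ ht (le_refl t)]


/-- Under the NGCA null hypothesis, `p + 2` is an eigenvalue of the FOBI matrix
`M = E[‖z‖² z zᵀ]` with multiplicity at least `p − q`: the characteristic polynomial of
`M` is divisible by `(X − (p+2))^{p−q}` (here `p = q + r`). -/
theorem fobi_eigenvalue_multiplicity {Ω : Type*} [MeasurableSpace Ω]
    {μ : Measure Ω} [IsProbabilityMeasure μ] {q r : ℕ}
    (z1 : Ω → Fin q → ℝ) (z2 : Ω → Fin r → ℝ)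
    (hz1m : Measurable z1) (hz2m : Measurable z2)
    (hmean : ∀ i, ∫ ω, z1 ω i ∂μ = 0)
    (hcov : ∀ i j, ∫ ω, z1 ω i * z1 ω j ∂μ = if i = j then 1 else 0)
    (hmom4 : Integrable (fun ω => ‖z1 ω‖ ^ 4) μ)
    (hz2 : Measure.map z2 μ = Measure.pi fun _ : Fin r => gaussianReal 0 1)
    (hindep : IndepFun z1 z2 μ) :
    (X - C ((q : ℝ) + (r : ℝ) + 2)) ^ r ∣
      (Matrix.of fun i j : Fin q ⊕ Fin r =>
        ∫ ω, (∑ k : Fin q ⊕ Fin r, (Sum.elim (z1 ω) (z2 ω) k) ^ 2) *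
          (Sum.elim (z1 ω) (z2 ω) i * Sum.elim (z1 ω) (z2 ω) j) ∂μ).charpoly := by
  classical
  have hz1i : ∀ a, Measurable fun ω => z1 ω a := fun a => (measurable_pi_apply a).comp hz1m
  set ν : Measure (Fin r → ℝ) := Measure.pi fun _ : Fin r => gaussianReal 0 1 with hν
  have keyInt : ∀ F : (Fin r → ℝ) → ℝ, Measurable F →
      ∫ ω, F (z2 ω) ∂μ = ∫ x, F x ∂ν := by
    intro F hF
    rw [← hz2]
    exact (integral_map hz2m.aemeasurable hF.aestronglyMeasurable).symm
  have keyIntg : ∀ F : (Fin r → ℝ) → ℝ, Measurable F → Integrable F ν →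
      Integrable (fun ω => F (z2 ω)) μ := by
    intro F hF h
    rw [← hz2] at h
    exact (integrable_map_measure hF.aestronglyMeasurable hz2m.aemeasurable).mp h
  have mS : Measurable fun x : Fin r → ℝ => ∑ k, x k ^ 2 :=
    Finset.measurable_sum _ fun k _ => (measurable_pi_apply k).pow measurable_const
  have mS1 : Measurable fun x : Fin q → ℝ => ∑ a, x a ^ 2 :=
    Finset.measurable_sum _ fun a _ => (measurable_pi_apply a).pow measurable_const
  -- z1-side integrability
  have hmaj : Integrable (fun ω => 1 + ‖z1 ω‖ ^ 4) μ := (integrable_const 1).add hmom4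
  have hIb : ∀ a b, Integrable (fun ω => z1 ω a * z1 ω b) μ := by
    intro a b
    refine hmaj.mono' ((hz1i a).mul (hz1i b)).aestronglyMeasurable
      (ae_of_all _ fun ω => ?_)
    have h1 := norm_le_pi_norm (z1 ω) a
    have h2 := norm_le_pi_norm (z1 ω) b
    have h3 := (le_one_add_pow_four ‖z1 ω‖ (norm_nonneg _)).2.1
    have h4 : (0:ℝ) ≤ ‖z1 ω‖ := norm_nonneg _
    rw [norm_mul]
    nlinarith [norm_nonneg (z1 ω a), norm_nonneg (z1 ω b)]
  have hIa : ∀ a, Integrable (fun ω => z1 ω a) μ := by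
    intro a
    refine hmaj.mono' (hz1i a).aestronglyMeasurable (ae_of_all _ fun ω => ?_)
    have h1 := norm_le_pi_norm (z1 ω) a
    have h3 := (le_one_add_pow_four ‖z1 ω‖ (norm_nonneg _)).1
    linarith
  have hS1 : Integrable (fun ω => ∑ a, z1 ω a ^ 2) μ := by
    have h : (fun ω => ∑ a, z1 ω a ^ 2) = fun ω => ∑ a, z1 ω a * z1 ω a := by
      ext ω; exact Finset.sum_congr rfl fun a _ => sq (z1 ω a)
    rw [h]
    exact integrable_finset_sum _ fun a _ => hIb a a
  have hES1 : ∫ ω, ∑ a, z1 ω a ^ 2 ∂μ = (q:ℝ) := by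
    have h : (fun ω => ∑ a, z1 ω a ^ 2) = fun ω => ∑ a, z1 ω a * z1 ω a := by
      ext ω; exact Finset.sum_congr rfl fun a _ => sq (z1 ω a)
    rw [h, integral_finset_sum _ fun a _ => hIb a a]
    simp [hcov]
  have hId : ∀ i, Integrable (fun ω => (∑ a, z1 ω a ^ 2) * z1 ω i) μ := by
    intro i
    have h : (fun ω => (∑ a, z1 ω a ^ 2) * z1 ω i) = fun ω => ∑ a, z1 ω a ^ 2 * z1 ω i := by
      ext ω; rw [Finset.sum_mul]
    rw [h]
    refine integrable_finset_sum _ fun a _ => ?_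
    refine hmaj.mono'
      (((hz1i a).pow measurable_const).mul (hz1i i)).aestronglyMeasurable
      (ae_of_all _ fun ω => ?_)
    have h1 := norm_le_pi_norm (z1 ω) a
    have h2 := norm_le_pi_norm (z1 ω) i
    have h3 := (le_one_add_pow_four ‖z1 ω‖ (norm_nonneg _)).2.2
    have h4 : (0:ℝ) ≤ ‖z1 ω‖ := norm_nonneg _
    rw [norm_mul, norm_pow]
    calc ‖z1 ω a‖ ^ 2 * ‖z1 ω i‖ ≤ ‖z1 ω‖ ^ 2 * ‖z1 ω‖ := by
          apply mul_le_mul (pow_le_pow_left₀ (norm_nonneg _) h1 2) h2 (norm_nonneg _)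
          positivity
      _ = ‖z1 ω‖ ^ 3 := by ring
      _ ≤ 1 + ‖z1 ω‖ ^ 4 := h3
  set c : ℝ := (q : ℝ) + (r : ℝ) + 2 with hc
  set A : Matrix (Fin q) (Fin q) ℝ := Matrix.of (fun i j : Fin q =>
    ∫ ω, (∑ k : Fin q ⊕ Fin r, (Sum.elim (z1 ω) (z2 ω) k) ^ 2) *
      (Sum.elim (z1 ω) (z2 ω) (Sum.inl i) * Sum.elim (z1 ω) (z2 ω) (Sum.inl j)) ∂μ) with hA
  have hsum : ∀ ω, (∑ k : Fin q ⊕ Fin r, (Sum.elim (z1 ω) (z2 ω) k) ^ 2)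
      = (∑ a, z1 ω a ^ 2) + (∑ b, z2 ω b ^ 2) := fun ω => by
    simp [Fintype.sum_sum_type]
  have e12 : ∀ (i : Fin q) (j : Fin r),
      ∫ ω, ((∑ a, z1 ω a ^ 2) + (∑ b, z2 ω b ^ 2)) * (z1 ω i * z2 ω j) ∂μ = 0 := by
    intro i j
    have hg1 : Integrable (fun ω => z2 ω j) μ :=
      keyIntg (fun x => x j) (measurable_pi_apply j) (nu_integrable_single j)
    have hg1v : ∫ ω, z2 ω j ∂μ = 0 := by
      rw [keyInt (fun x => x j) (measurable_pi_apply j)]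
      exact nu_int_single j
    have hind1 : IndepFun (fun ω => (∑ a, z1 ω a ^ 2) * z1 ω i) (fun ω => z2 ω j) μ :=
      hindep.comp (mS1.mul (measurable_pi_apply i)) (measurable_pi_apply j)
    have hI1 : Integrable (fun ω => ((∑ a, z1 ω a ^ 2) * z1 ω i) * z2 ω j) μ :=
      hind1.integrable_mul (hId i) hg1
    have ht1 : ∫ ω, ((∑ a, z1 ω a ^ 2) * z1 ω i) * z2 ω j ∂μ
        = (∫ ω, (∑ a, z1 ω a ^ 2) * z1 ω i ∂μ) * ∫ ω, z2 ω j ∂μ :=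
      hind1.integral_mul_eq_mul_integral (hId i).aestronglyMeasurable hg1.aestronglyMeasurable
    have hg2 : Integrable (fun ω => (∑ b, z2 ω b ^ 2) * z2 ω j) μ :=
      keyIntg (fun x => (∑ k, x k ^ 2) * x j) (mS.mul (measurable_pi_apply j))
        (nu_integrable_sum_single j)
    have hind2 : IndepFun (fun ω => z1 ω i) (fun ω => (∑ b, z2 ω b ^ 2) * z2 ω j) μ :=
      hindep.comp (measurable_pi_apply i) (mS.mul (measurable_pi_apply j))
    have hI2 : Integrable (fun ω => z1 ω i * ((∑ b, z2 ω b ^ 2) * z2 ω j)) μ :=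
      hind2.integrable_mul (hIa i) hg2
    have ht2 : ∫ ω, z1 ω i * ((∑ b, z2 ω b ^ 2) * z2 ω j) ∂μ
        = (∫ ω, z1 ω i ∂μ) * ∫ ω, (∑ b, z2 ω b ^ 2) * z2 ω j ∂μ :=
      hind2.integral_mul_eq_mul_integral (hIa i).aestronglyMeasurable hg2.aestronglyMeasurable
    have hsplit : (fun ω => ((∑ a, z1 ω a ^ 2) + (∑ b, z2 ω b ^ 2)) * (z1 ω i * z2 ω j))
        = fun ω => ((∑ a, z1 ω a ^ 2) * z1 ω i) * z2 ω j
            + z1 ω i * ((∑ b, z2 ω b ^ 2) * z2 ω j) := by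
      ext ω; ring
    rw [hsplit, integral_add hI1 hI2, ht1, ht2, hg1v, hmean i]
    ring
  have e22 : ∀ (i j : Fin r),
      ∫ ω, ((∑ a, z1 ω a ^ 2) + (∑ b, z2 ω b ^ 2)) * (z2 ω i * z2 ω j) ∂μ
        = if i = j then c else 0 := by
    intro i j
    have mW : Measurable fun x : Fin r → ℝ => x i * x j :=
      (measurable_pi_apply i).mul (measurable_pi_apply j)
    have hW : Integrable (fun ω => z2 ω i * z2 ω j) μ :=
      keyIntg (fun x => x i * x j) mW (nu_integrable_pair i j)
    have hWval : ∫ ω, z2 ω i * z2 ω j ∂μ = if i = j then 1 else 0 := by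
      rw [keyInt (fun x => x i * x j) mW]
      exact nu_int_pair i j
    have hind : IndepFun (fun ω => ∑ a, z1 ω a ^ 2) (fun ω => z2 ω i * z2 ω j) μ :=
      hindep.comp mS1 mW
    have hI1 : Integrable (fun ω => (∑ a, z1 ω a ^ 2) * (z2 ω i * z2 ω j)) μ :=
      hind.integrable_mul hS1 hW
    have ht1 : ∫ ω, (∑ a, z1 ω a ^ 2) * (z2 ω i * z2 ω j) ∂μ
        = (∫ ω, ∑ a, z1 ω a ^ 2 ∂μ) * ∫ ω, z2 ω i * z2 ω j ∂μ :=
      hind.integral_mul_eq_mul_integral hS1.aestronglyMeasurable hW.aestronglyMeasurable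
    have mS2W : Measurable fun x : Fin r → ℝ => (∑ k, x k ^ 2) * (x i * x j) := mS.mul mW
    have hI2 : Integrable (fun ω => (∑ b, z2 ω b ^ 2) * (z2 ω i * z2 ω j)) μ :=
      keyIntg (fun x => (∑ k, x k ^ 2) * (x i * x j)) mS2W (nu_integrable_sum_mul i j)
    have ht2 : ∫ ω, (∑ b, z2 ω b ^ 2) * (z2 ω i * z2 ω j) ∂μ
        = if i = j then (r : ℝ) + 2 else 0 := by
      rw [keyInt (fun x => (∑ k, x k ^ 2) * (x i * x j)) mS2W]
      exact nu_int_sum_mul i j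
    have hsplit : (fun ω => ((∑ a, z1 ω a ^ 2) + (∑ b, z2 ω b ^ 2)) * (z2 ω i * z2 ω j))
        = fun ω => (∑ a, z1 ω a ^ 2) * (z2 ω i * z2 ω j)
            + (∑ b, z2 ω b ^ 2) * (z2 ω i * z2 ω j) := by
      ext ω; ring
    rw [hsplit, integral_add hI1 hI2, ht1, ht2, hES1, hWval]
    split_ifs with h
    · rw [hc]; ring
    · ring
  have hmain : (Matrix.of fun i j : Fin q ⊕ Fin r =>
      ∫ ω, (∑ k : Fin q ⊕ Fin r, (Sum.elim (z1 ω) (z2 ω) k) ^ 2) *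
        (Sum.elim (z1 ω) (z2 ω) i * Sum.elim (z1 ω) (z2 ω) j) ∂μ)
      = Matrix.fromBlocks A 0 0 (Matrix.diagonal fun _ : Fin r => c) := by
    ext i j
    rcases i with i | i <;> rcases j with j | j
    · rfl
    · simp only [Matrix.of_apply, Matrix.fromBlocks_apply₁₂, Matrix.zero_apply,
        Sum.elim_inl, Sum.elim_inr]
      simp only [hsum]
      exact e12 i j
    · simp only [Matrix.of_apply, Matrix.fromBlocks_apply₂₁, Matrix.zero_apply,
        Sum.elim_inl, Sum.elim_inr]
      simp only [hsum]
      rw [show (fun ω => ((∑ a, z1 ω a ^ 2) + (∑ b, z2 ω b ^ 2)) * (z2 ω i * z1 ω j))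
          = fun ω => ((∑ a, z1 ω a ^ 2) + (∑ b, z2 ω b ^ 2)) * (z1 ω j * z2 ω i) from
        funext fun ω => by ring]
      exact e12 j i
    · simp only [Matrix.of_apply, Matrix.fromBlocks_apply₂₂, Sum.elim_inr,
        Matrix.diagonal_apply]
      simp only [hsum]
      exact e22 i j
  rw [hmain, Matrix.charpoly_fromBlocks_zero₁₂, charpoly_diag_const]
  exact dvd_mul_left _ _
end
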